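/- arXiv:1210.3924 — 3 statements merged into one kernel-verified Lean document; each statement's English description precedes it below -/
import Mathlib

section
/- Let (Ω, F, μ; (F_i)_{i∈ℤ}) be a σ-finite filtered measure space, 1 < p < ∞, and f ∈ L^p(μ) nonnegative with f ∈ ⋂_i L¹_{F_i⁰}(F, μ). Then Doob's maximal function f* := sup_{i∈ℤ} E[f|F_i] satisfies ‖f*‖_{L^p(μ)} ≤ p/(p−1) · ‖f‖_{L^p(μ)}. -/
open MeasureTheory Set
open scoped ENNReal

private lemma enn_rpow_iSup (u : ℕ → ℝ≥0∞) {r : ℝ} (hr : 0 < r) :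
    (⨆ n, u n) ^ r = ⨆ n, u n ^ r := by
  refine Monotone.map_iSup_of_continuousAt ?_ (fun x y hxy => ENNReal.rpow_le_rpow hxy hr.le) ?_
  · exact ENNReal.continuous_rpow_const.continuousAt
  · simp [ENNReal.zero_rpow_of_pos hr]

private lemma enn_iSup_min (a : ℝ≥0∞) : ⨆ n : ℕ, min a (ENNReal.ofReal (n + 1)) = a := by
  refine le_antisymm (iSup_le fun n => min_le_left _ _) ?_
  by_cases ha : a = ∞
  · subst ha
    simp only [min_eq_right (le_top : ENNReal.ofReal _ ≤ ∞)]
    rw [← ENNReal.iSup_natCast]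
    refine iSup_mono fun n => ?_
    rw [← ENNReal.ofReal_natCast n]
    exact ENNReal.ofReal_le_ofReal (by linarith)
  · obtain ⟨n, hn⟩ := exists_nat_gt a.toReal
    refine le_iSup_of_le n (le_min le_rfl ?_)
    rw [← ENNReal.ofReal_toReal ha]
    exact ENNReal.ofReal_le_ofReal (by linarith)

private lemma doob_intJ {p : ℝ} (hp : 1 < p) {c : ℝ} (hc : 0 ≤ c) :
    ∫⁻ t in Ioc 0 c, ENNReal.ofReal (p * t ^ (p - 2)) =
      ENNReal.ofReal (p / (p - 1) * c ^ (p - 1)) := by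
  have hInt : IntegrableOn (fun t : ℝ => p * t ^ (p - 2)) (Ioc 0 c) := by
    have := (intervalIntegral.intervalIntegrable_rpow' (a := 0) (b := c)
      (by linarith : (-1 : ℝ) < p - 2)).const_mul p
    rwa [intervalIntegrable_iff_integrableOn_Ioc_of_le hc] at this
  rw [← ofReal_integral_eq_lintegral_ofReal hInt ?_]
  · congr 1
    rw [← intervalIntegral.integral_of_le hc, intervalIntegral.integral_const_mul,
      integral_rpow (Or.inl (by linarith : (-1 : ℝ) < p - 2))]
    rw [Real.zero_rpow (by linarith : p - 2 + 1 ≠ 0)]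
    have : p - 2 + 1 = p - 1 := by ring
    rw [this]
    field_simp
    ring
  · filter_upwards [ae_restrict_mem measurableSet_Ioc] with t ht
    have h1 : (0:ℝ) < t := ht.1
    positivity
open scoped ENNReal

private lemma doob_weak {Ω : Type*} {m0 : MeasurableSpace Ω} (μ : Measure Ω) [SigmaFinite μ]
    (ℱ : MeasureTheory.Filtration ℤ m0) [∀ i, SigmaFinite (μ.trim (ℱ.le i))]
    (f : Ω → ℝ) (hf0 : 0 ≤ f) (hfi : Integrable f μ) {t : ℝ} (ht : 0 < t) :
    ENNReal.ofReal t * μ {ω | ENNReal.ofReal t < ⨆ i : ℤ, ENNReal.ofReal ((μ[f|ℱ i]) ω)} ≤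
      ∫⁻ ω in {ω | ENNReal.ofReal t < ⨆ i : ℤ, ENNReal.ofReal ((μ[f|ℱ i]) ω)},
        ENNReal.ofReal (f ω) ∂μ := by
  set g : ℤ → Ω → ℝ := fun i => μ[f|ℱ i] with hg
  have hgm : ∀ i, StronglyMeasurable[ℱ i] (g i) := fun i => stronglyMeasurable_condExp
  have hgi : ∀ i, Integrable (g i) μ := fun i => integrable_condExp
  have hgnn : ∀ i, 0 ≤ᵐ[μ] g i := fun i => condExp_nonneg (Filter.Eventually.of_forall hf0)
  set S : Set Ω := {ω | ENNReal.ofReal t < ⨆ i : ℤ, ENNReal.ofReal (g i ω)} with hS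
  have hSmem : ∀ ω, ω ∈ S ↔ ∃ i : ℤ, t < g i ω := by
    intro ω
    simp only [hS, mem_setOf_eq, lt_iSup_iff]
    constructor
    · rintro ⟨i, hi⟩
      refine ⟨i, ?_⟩
      by_contra h
      exact absurd (ENNReal.ofReal_le_ofReal (not_lt.mp h)) (not_le.mpr hi)
    · rintro ⟨i, hi⟩
      exact ⟨i, (ENNReal.ofReal_lt_ofReal_iff_of_nonneg ht.le).mpr hi⟩
  -- first-entry sets
  set A : ℕ → ℤ → Set Ω := fun N k =>
    {ω | t < g k ω} ∩ ⋂ (j : ℤ) (_ : j ∈ Finset.Icc (-(N : ℤ)) N) (_ : j < k), {ω | g j ω ≤ t}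
    with hA
  have hAmeas : ∀ N k, MeasurableSet[ℱ k] (A N k) := by
    intro N k
    refine (measurableSet_lt measurable_const (hgm k).measurable).inter ?_
    refine MeasurableSet.iInter fun j => MeasurableSet.iInter fun _ =>
      MeasurableSet.iInter fun hjk => ?_
    exact measurableSet_le ((hgm j).mono (ℱ.mono hjk.le)).measurable measurable_const
  have hAmeas0 : ∀ N k, MeasurableSet (A N k) := fun N k => ℱ.le k _ (hAmeas N k)
  set SN : ℕ → Set Ω := fun N => {ω | ∃ k ∈ Finset.Icc (-(N : ℤ)) N, t < g k ω} with hSN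
  have hUnion : ∀ N, SN N = ⋃ k ∈ Finset.Icc (-(N : ℤ)) (N : ℤ), A N k := by
    intro N
    ext ω
    simp only [hSN, mem_setOf_eq, mem_iUnion, exists_prop]
    constructor
    · rintro ⟨k, hk, hkt⟩
      set T : Finset ℤ := (Finset.Icc (-(N : ℤ)) N).filter (fun j => t < g j ω) with hT
      have hTne : T.Nonempty := ⟨k, Finset.mem_filter.mpr ⟨hk, hkt⟩⟩
      refine ⟨T.min' hTne, (Finset.mem_filter.mp (T.min'_mem hTne)).1, ?_, ?_⟩
      · exact (Finset.mem_filter.mp (T.min'_mem hTne)).2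
      · refine mem_iInter.mpr fun j => mem_iInter.mpr fun hj => mem_iInter.mpr fun hjlt => ?_
        by_contra h
        have hjT : j ∈ T := Finset.mem_filter.mpr ⟨hj, not_le.mp h⟩
        exact absurd (T.min'_le j hjT) (not_le.mpr hjlt)
    · rintro ⟨k, hk, hkt, -⟩
      exact ⟨k, hk, hkt⟩
  have hdisj' : ∀ N : ℕ, ∀ k ∈ Finset.Icc (-(N : ℤ)) (N : ℤ), ∀ l, k < l →
      Disjoint (A N k) (A N l) := by
    intro N k hk l h
    refine Set.disjoint_left.mpr fun ω hωk hωl => ?_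
    have h1 : t < g k ω := hωk.1
    have h2 : g k ω ≤ t := by
      have := hωl.2
      simp only [mem_iInter] at this
      exact this k hk h
    exact absurd h1 (not_lt.mpr h2)
  have hdisj : ∀ N : ℕ, Set.PairwiseDisjoint
      ((Finset.Icc (-(N : ℤ)) (N : ℤ) : Finset ℤ) : Set ℤ) (A N) := by
    intro N k hk l hl hkl
    rcases hkl.lt_or_gt with h | h
    · exact hdisj' N k hk l h
    · exact (hdisj' N l hl k h).symm
  -- per-piece inequality
  have hkey : ∀ N k, ENNReal.ofReal t * μ (A N k) ≤ ∫⁻ ω in A N k, ENNReal.ofReal (f ω) ∂μ := by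
    intro N k
    have step1 : ENNReal.ofReal t * μ (A N k) ≤ ∫⁻ ω in A N k, ENNReal.ofReal (g k ω) ∂μ := by
      rw [← setLIntegral_const (A N k) (ENNReal.ofReal t)]
      refine setLIntegral_mono ((hgm k).mono (ℱ.le k)).measurable.ennreal_ofReal
        fun ω hω => ENNReal.ofReal_le_ofReal hω.1.le
    have step2 : ∫⁻ ω in A N k, ENNReal.ofReal (g k ω) ∂μ =
        ENNReal.ofReal (∫ ω in A N k, g k ω ∂μ) :=
      (ofReal_integral_eq_lintegral_ofReal ((hgi k).integrableOn)
        (ae_restrict_of_ae (hgnn k))).symm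
    have step3 : ∫ ω in A N k, g k ω ∂μ = ∫ ω in A N k, f ω ∂μ :=
      setIntegral_condExp (ℱ.le k) hfi (hAmeas N k)
    have step4 : ENNReal.ofReal (∫ ω in A N k, f ω ∂μ) = ∫⁻ ω in A N k, ENNReal.ofReal (f ω) ∂μ :=
      ofReal_integral_eq_lintegral_ofReal (hfi.integrableOn)
        (ae_restrict_of_ae (Filter.Eventually.of_forall hf0))
    calc ENNReal.ofReal t * μ (A N k) ≤ _ := step1
    _ = _ := step2
    _ = _ := by rw [step3]
    _ = _ := step4
  -- finite-window inequality
  have hSNle : ∀ N, ENNReal.ofReal t * μ (SN N) ≤ ∫⁻ ω in S, ENNReal.ofReal (f ω) ∂μ := by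
    intro N
    have hsub : SN N ⊆ S := by
      intro ω hω
      obtain ⟨k, _, hkt⟩ := hω
      exact (hSmem ω).mpr ⟨k, hkt⟩
    calc ENNReal.ofReal t * μ (SN N)
        = ENNReal.ofReal t * ∑ k ∈ Finset.Icc (-(N : ℤ)) (N : ℤ), μ (A N k) := by
          rw [hUnion N, measure_biUnion_finset (hdisj N) (fun k _ => hAmeas0 N k)]
      _ = ∑ k ∈ Finset.Icc (-(N : ℤ)) (N : ℤ), ENNReal.ofReal t * μ (A N k) := by
          rw [Finset.mul_sum]
      _ ≤ ∑ k ∈ Finset.Icc (-(N : ℤ)) (N : ℤ), ∫⁻ ω in A N k, ENNReal.ofReal (f ω) ∂μ :=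
          Finset.sum_le_sum fun k _ => hkey N k
      _ = ∫⁻ ω in ⋃ k ∈ Finset.Icc (-(N : ℤ)) (N : ℤ), A N k, ENNReal.ofReal (f ω) ∂μ :=
          (lintegral_biUnion_finset (hdisj N) (fun k _ => hAmeas0 N k) _).symm
      _ = ∫⁻ ω in SN N, ENNReal.ofReal (f ω) ∂μ := by rw [← hUnion N]
      _ ≤ ∫⁻ ω in S, ENNReal.ofReal (f ω) ∂μ := lintegral_mono_set hsub
  -- pass to the limit
  have hSeq : S = ⋃ N : ℕ, SN N := by
    ext ω
    simp only [hSmem, mem_iUnion, hSN, mem_setOf_eq]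
    constructor
    · rintro ⟨i, hi⟩
      exact ⟨i.natAbs, ⟨i, by rw [Finset.mem_Icc]; omega, hi⟩⟩
    · rintro ⟨N, k, _, hk⟩
      exact ⟨k, hk⟩
  have hmono : Monotone SN := by
    intro N M hNM ω hω
    obtain ⟨k, hk, hkt⟩ := hω
    refine ⟨k, ?_, hkt⟩
    rw [Finset.mem_Icc] at hk ⊢
    omega
  rw [hSeq, hmono.measure_iUnion, ENNReal.mul_iSup]
  exact iSup_le fun N => (hSNle N).trans (by rw [hSeq])

set_option maxHeartbeats 1000000 in
/-- Doob's `L^p` maximal inequality, `1 < p < ∞`: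
`‖f*‖_p ≤ (p/(p-1)) ‖f‖_p` for nonnegative `f ∈ L^p(μ) ∩ 𝓛`. -/
theorem stmt5 {Ω : Type*} {m0 : MeasurableSpace Ω} (μ : Measure Ω) [SigmaFinite μ]
    (ℱ : MeasureTheory.Filtration ℤ m0) [∀ i, SigmaFinite (μ.trim (ℱ.le i))]
    (p : ℝ) (hp : 1 < p)
    (f : Ω → ℝ) (hf : Measurable f) (hf0 : 0 ≤ f)
    (hfLp : MemLp f (ENNReal.ofReal p) μ)
    (hf𝓛 : ∀ (i : ℤ) (E : Set Ω), MeasurableSet[ℱ i] E → μ E < ∞ →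
      Integrable f (μ.restrict E)) :
    (∫⁻ ω, (⨆ i : ℤ, ENNReal.ofReal ((μ[f|ℱ i]) ω)) ^ p ∂μ) ^ (1 / p) ≤
      ENNReal.ofReal (p / (p - 1)) * (∫⁻ ω, ENNReal.ofReal (f ω) ^ p ∂μ) ^ (1 / p) := by
  have hp0 : (0:ℝ) < p := lt_trans zero_lt_one hp
  by_cases hfi : Integrable f μ
  swap
  · have h0 : ∀ i : ℤ, μ[f|ℱ i] = 0 := fun i => condExp_of_not_integrable hfi
    simp only [h0, Pi.zero_apply, ENNReal.ofReal_zero, ciSup_const,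
      ENNReal.zero_rpow_of_pos hp0, lintegral_zero,
      ENNReal.zero_rpow_of_pos (by positivity : (0:ℝ) < 1/p)]
    exact zero_le
  have hp1 : (0:ℝ) < p - 1 := by linarith
  set F : Ω → ℝ≥0∞ := fun ω => ⨆ i : ℤ, ENNReal.ofReal ((μ[f|ℱ i]) ω) with hF
  have hFm : Measurable F :=
    Measurable.iSup fun i => ((stronglyMeasurable_condExp.mono (ℱ.le i)).measurable).ennreal_ofReal
  set h : ℕ → Ω → ℝ := fun n ω => (min (F ω) (ENNReal.ofReal ((n : ℝ) + 1))).toReal with hh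
  have hhm : ∀ n, Measurable (h n) := fun n => (hFm.min measurable_const).ennreal_toReal
  have hofh : ∀ n ω, ENNReal.ofReal (h n ω) = min (F ω) (ENNReal.ofReal ((n : ℝ) + 1)) := fun n ω =>
    ENNReal.ofReal_toReal ((min_le_right _ _).trans_lt ENNReal.ofReal_lt_top).ne
  have hnn : ∀ n ω, 0 ≤ h n ω := fun n ω => ENNReal.toReal_nonneg
  have hleM : ∀ n ω, h n ω ≤ (n : ℝ) + 1 := fun n ω =>
    ENNReal.toReal_le_of_le_ofReal (by positivity) (min_le_right _ _)
  set B : ℝ≥0∞ := ∫⁻ ω, ENNReal.ofReal (f ω) ^ p ∂μ with hB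
  set K : ℝ≥0∞ := ENNReal.ofReal (p / (p - 1)) * B ^ (1 / p) with hK
  set A : ℕ → ℝ≥0∞ := fun n => ∫⁻ ω, ENNReal.ofReal (h n ω) ^ p ∂μ with hA
  -- weak maximal inequality for the truncated maximal function
  have hweak : ∀ (n : ℕ) (t : ℝ), 0 < t →
      μ {ω | t < h n ω} * ENNReal.ofReal t ≤
        ∫⁻ ω in {ω | t < h n ω}, ENNReal.ofReal (f ω) ∂μ := by
    intro n t ht
    by_cases htM : t < (n : ℝ) + 1
    · have hset : {ω | t < h n ω} = {ω | ENNReal.ofReal t < F ω} := by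
        ext ω
        simp only [mem_setOf_eq, hh]
        rw [← ENNReal.ofReal_lt_iff_lt_toReal ht.le
          ((min_le_right _ _).trans_lt ENNReal.ofReal_lt_top).ne, lt_min_iff,
          and_iff_left ((ENNReal.ofReal_lt_ofReal_iff_of_nonneg ht.le).mpr htM)]
      rw [hset, mul_comm]
      exact doob_weak μ ℱ f hf0 hfi ht
    · have hempty : {ω | t < h n ω} = ∅ := by
        ext ω
        simp only [mem_setOf_eq, mem_empty_iff_false, iff_false, not_lt]
        exact (hleM n ω).trans (not_lt.mp htM)
      simp [hempty]
  -- layer cake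
  have hlayer : ∀ n, A n =
      ∫⁻ t in Ioi (0:ℝ), μ {a | t < h n a} * ENNReal.ofReal (p * t ^ (p - 1)) := by
    intro n
    have heq : ∀ ω, ENNReal.ofReal (h n ω) ^ p =
        ENNReal.ofReal (∫ s in (0:ℝ)..(h n ω), p * s ^ (p - 1)) := by
      intro ω
      rw [intervalIntegral.integral_const_mul, integral_rpow (Or.inl (by linarith)),
        Real.zero_rpow (by linarith : p - 1 + 1 ≠ 0),
        ENNReal.ofReal_rpow_of_nonneg (hnn n ω) hp0.le]
      congr 1
      have hpe : p - 1 + 1 = p := by ring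
      rw [hpe]
      field_simp
      ring
    simp_rw [hA, heq]
    exact lintegral_comp_eq_lintegral_meas_lt_mul μ (Filter.Eventually.of_forall (hnn n))
      (hhm n).aemeasurable
      (fun t ht => (intervalIntegral.intervalIntegrable_rpow' (by linarith)).const_mul p)
      (by filter_upwards [ae_restrict_mem measurableSet_Ioi] with t ht; have h0t : (0:ℝ) < t := ht; positivity)
  -- constants
  have hC : ∫⁻ ω, ENNReal.ofReal (f ω) ∂μ < ∞ := hfi.lintegral_lt_top
  have hsplit : ∀ t : ℝ, 0 < t →
      ENNReal.ofReal (p * t ^ (p - 1)) = ENNReal.ofReal t * ENNReal.ofReal (p * t ^ (p - 2)) := by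
    intro t ht
    rw [← ENNReal.ofReal_mul ht.le]
    congr 1
    rw [show p - 1 = p - 2 + 1 by ring, Real.rpow_add_one ht.ne' (p - 2)]
    ring
  have hptwise : ∀ (n : ℕ), ∀ t ∈ Ioi (0:ℝ),
      μ {a | t < h n a} * ENNReal.ofReal (p * t ^ (p - 1)) ≤
        (∫⁻ ω in {a | t < h n a}, ENNReal.ofReal (f ω) ∂μ) * ENNReal.ofReal (p * t ^ (p - 2)) := by
    intro n t ht
    rw [hsplit t ht, ← mul_assoc]
    exact mul_le_mul_left (hweak n t ht) _
  -- a priori finiteness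
  have hAfin : ∀ n, A n < ∞ := by
    intro n
    rw [hlayer n]
    have hb : ∀ t ∈ Ioi (0:ℝ), μ {a | t < h n a} * ENNReal.ofReal (p * t ^ (p - 1)) ≤
        (Ioc (0:ℝ) ((n:ℝ)+1)).indicator
          (fun t => ENNReal.ofReal (p * t ^ (p - 2)) * (∫⁻ ω, ENNReal.ofReal (f ω) ∂μ)) t := by
      intro t ht
      by_cases htM : t ≤ (n:ℝ) + 1
      · have hmem : t ∈ Ioc (0:ℝ) ((n:ℝ)+1) := Set.mem_Ioc.mpr ⟨ht, htM⟩
        rw [indicator_of_mem hmem]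
        refine (hptwise n t ht).trans ?_
        rw [mul_comm]
        exact mul_le_mul_right (setLIntegral_le_lintegral _ _) _
      · rw [not_le] at htM
        have hempty : {a | t < h n a} = ∅ := by
          ext ω
          simp only [mem_setOf_eq, mem_empty_iff_false, iff_false, not_lt]
          exact (hleM n ω).trans htM.le
        simp [hempty]
    calc ∫⁻ t in Ioi (0:ℝ), μ {a | t < h n a} * ENNReal.ofReal (p * t ^ (p - 1))
        ≤ ∫⁻ t in Ioi (0:ℝ), (Ioc (0:ℝ) ((n:ℝ)+1)).indicator
            (fun t => ENNReal.ofReal (p * t ^ (p - 2)) *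
              (∫⁻ ω, ENNReal.ofReal (f ω) ∂μ)) t := setLIntegral_mono' measurableSet_Ioi hb
      _ = ∫⁻ t in Ioc (0:ℝ) ((n:ℝ)+1), ENNReal.ofReal (p * t ^ (p - 2)) *
            (∫⁻ ω, ENNReal.ofReal (f ω) ∂μ) := by
          rw [lintegral_indicator measurableSet_Ioc, Measure.restrict_restrict measurableSet_Ioc,
            inter_eq_self_of_subset_left Ioc_subset_Ioi_self]
      _ = (∫⁻ t in Ioc (0:ℝ) ((n:ℝ)+1), ENNReal.ofReal (p * t ^ (p - 2))) *
            (∫⁻ ω, ENNReal.ofReal (f ω) ∂μ) := lintegral_mul_const' _ _ hC.ne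
      _ = ENNReal.ofReal (p / (p - 1) * ((n:ℝ)+1) ^ (p - 1)) *
            (∫⁻ ω, ENNReal.ofReal (f ω) ∂μ) := by rw [doob_intJ hp (by positivity)]
      _ < ∞ := ENNReal.mul_lt_top ENNReal.ofReal_lt_top hC
  -- Tonelli
  have htonelli : ∀ n : ℕ,
      ∫⁻ t in Ioi (0:ℝ), (∫⁻ ω in {a | t < h n a}, ENNReal.ofReal (f ω) ∂μ) *
          ENNReal.ofReal (p * t ^ (p - 2)) =
        ∫⁻ ω, ENNReal.ofReal (f ω) *
          ENNReal.ofReal (p / (p - 1) * h n ω ^ (p - 1)) ∂μ := by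
    intro n
    set Ψ : ℝ × Ω → ℝ≥0∞ := fun q =>
      ({q : ℝ × Ω | q.1 < h n q.2}).indicator
        (fun q => ENNReal.ofReal (f q.2) * ENNReal.ofReal (p * q.1 ^ (p - 2))) q with hΨ
    have hSmeas : MeasurableSet {q : ℝ × Ω | q.1 < h n q.2} :=
      measurableSet_lt measurable_fst ((hhm n).comp measurable_snd)
    have hΨm : Measurable Ψ :=
      (((hf.comp measurable_snd).ennreal_ofReal).mul
        ((measurable_fst.pow_const (p - 2)).const_mul p).ennreal_ofReal).indicator hSmeas
    have hleft : ∀ t : ℝ, (∫⁻ ω in {a | t < h n a}, ENNReal.ofReal (f ω) ∂μ) *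
        ENNReal.ofReal (p * t ^ (p - 2)) = ∫⁻ ω, Ψ (t, ω) ∂μ := by
      intro t
      have hpt : ∀ ω, Ψ (t, ω) = ({a | t < h n a}).indicator
          (fun ω => ENNReal.ofReal (f ω) * ENNReal.ofReal (p * t ^ (p - 2))) ω := by
        intro ω
        simp only [hΨ, indicator_apply, mem_setOf_eq]
      simp_rw [hpt]
      rw [lintegral_indicator (measurableSet_lt measurable_const (hhm n)),
        lintegral_mul_const' _ _ ENNReal.ofReal_ne_top]
    have hright : ∀ ω : Ω, (∫⁻ t in Ioi (0:ℝ), Ψ (t, ω)) =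
        ENNReal.ofReal (f ω) * ENNReal.ofReal (p / (p - 1) * h n ω ^ (p - 1)) := by
      intro ω
      have hpt : ∀ t : ℝ, Ψ (t, ω) = ENNReal.ofReal (f ω) *
          (Iio (h n ω)).indicator (fun t => ENNReal.ofReal (p * t ^ (p - 2))) t := by
        intro t
        simp only [hΨ, indicator_apply, mem_setOf_eq, mem_Iio, mul_ite, mul_zero]
      simp_rw [hpt]
      rw [lintegral_const_mul' _ _ ENNReal.ofReal_ne_top]
      congr 1
      rw [lintegral_indicator measurableSet_Iio, Measure.restrict_restrict measurableSet_Iio,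
        show Iio (h n ω) ∩ Ioi 0 = Ioo 0 (h n ω) from by rw [inter_comm]; exact Ioi_inter_Iio,
        setLIntegral_congr Ioo_ae_eq_Ioc]
      exact doob_intJ hp (hnn n ω)
    calc ∫⁻ t in Ioi (0:ℝ), (∫⁻ ω in {a | t < h n a}, ENNReal.ofReal (f ω) ∂μ) *
          ENNReal.ofReal (p * t ^ (p - 2))
        = ∫⁻ t in Ioi (0:ℝ), (∫⁻ ω, Ψ (t, ω) ∂μ) := by simp_rw [hleft]
      _ = ∫⁻ ω, (∫⁻ t in Ioi (0:ℝ), Ψ (t, ω)) ∂μ := lintegral_lintegral_swap hΨm.aemeasurable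
      _ = _ := by simp_rw [hright]
  -- main estimate via Hölder
  have hmain : ∀ n, A n ≤ K * A n ^ ((p - 1) / p) := by
    intro n
    have hconj : Real.HolderConjugate p (p / (p - 1)) := Real.HolderConjugate.conjExponent hp
    have step1 : A n ≤
        ∫⁻ ω, ENNReal.ofReal (f ω) * ENNReal.ofReal (p / (p - 1) * h n ω ^ (p - 1)) ∂μ := by
      rw [hlayer n, ← htonelli n]
      exact setLIntegral_mono' measurableSet_Ioi (hptwise n)
    have step2 : ∫⁻ ω, ENNReal.ofReal (f ω) * ENNReal.ofReal (p / (p - 1) * h n ω ^ (p - 1)) ∂μ =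
        ENNReal.ofReal (p / (p - 1)) *
          ∫⁻ ω, ENNReal.ofReal (f ω) * ENNReal.ofReal (h n ω) ^ (p - 1) ∂μ := by
      rw [← lintegral_const_mul' _ _ ENNReal.ofReal_ne_top]
      refine lintegral_congr fun ω => ?_
      rw [ENNReal.ofReal_mul (by positivity : (0:ℝ) ≤ p / (p - 1)),
        ENNReal.ofReal_rpow_of_nonneg (hnn n ω) hp1.le]
      ring
    have step3 : ∫⁻ ω, ENNReal.ofReal (f ω) * ENNReal.ofReal (h n ω) ^ (p - 1) ∂μ ≤
        B ^ (1 / p) * A n ^ ((p - 1) / p) := by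
      have hhold := ENNReal.lintegral_mul_le_Lp_mul_Lq μ hconj
        (hf.ennreal_ofReal.aemeasurable)
        (((hhm n).ennreal_ofReal.pow_const (p - 1)).aemeasurable)
      simp only [Pi.mul_apply] at hhold
      rw [one_div_div] at hhold
      have hbase : ∫⁻ a, (ENNReal.ofReal (h n a) ^ (p - 1)) ^ (p / (p - 1)) ∂μ =
          ∫⁻ a, ENNReal.ofReal (h n a) ^ p ∂μ := by
        refine lintegral_congr fun ω => ?_
        rw [← ENNReal.rpow_mul]
        congr 1
        field_simp
      rw [hbase] at hhold
      exact hhold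
    calc A n ≤ _ := step1
      _ = _ := step2
      _ ≤ ENNReal.ofReal (p / (p - 1)) * (B ^ (1 / p) * A n ^ ((p - 1) / p)) :=
          mul_le_mul_right step3 _
      _ = K * A n ^ ((p - 1) / p) := by rw [hK, mul_assoc]
  -- extract the bound on A n ^ (1/p)
  have hAK : ∀ n, A n ^ (1 / p) ≤ K := by
    intro n
    rcases eq_or_ne (A n) 0 with h0 | h0
    · rw [h0, ENNReal.zero_rpow_of_pos (by positivity : (0:ℝ) < 1 / p)]
      exact zero_le
    · have hfin : A n ≠ ∞ := (hAfin n).ne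
      have hne0 : A n ^ ((p - 1) / p) ≠ 0 := by
        simp only [ne_eq, ENNReal.rpow_eq_zero_iff, not_or, not_and]
        constructor
        · intro hc; exact absurd hc h0
        · intro hc; exact absurd hc hfin
      have hnetop : A n ^ ((p - 1) / p) ≠ ∞ :=
        (ENNReal.rpow_lt_top_of_nonneg (by positivity) hfin).ne
      have hA1 : A n ^ (1 / p) * A n ^ ((p - 1) / p) ≤ K * A n ^ ((p - 1) / p) := by
        rw [← ENNReal.rpow_add _ _ h0 hfin, show 1 / p + (p - 1) / p = 1 from by
          field_simp; ring, ENNReal.rpow_one]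
        exact hmain n
      exact (ENNReal.mul_le_mul_iff_left hne0 hnetop).mp hA1
  -- monotone convergence
  have hlim : ∫⁻ ω, F ω ^ p ∂μ = ⨆ n, A n := by
    have hptw : ∀ ω, F ω ^ p = ⨆ n : ℕ, ENNReal.ofReal (h n ω) ^ p := by
      intro ω
      have h1 : (⨆ n : ℕ, ENNReal.ofReal (h n ω)) = F ω := by
        simp_rw [hofh]
        exact enn_iSup_min (F ω)
      rw [← h1, enn_rpow_iSup _ hp0]
    simp_rw [hA, hptw]
    refine lintegral_iSup (fun n => (hhm n).ennreal_ofReal.pow_const p) ?_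
    intro m n hmn ω
    refine ENNReal.rpow_le_rpow ?_ hp0.le
    rw [hofh, hofh]
    exact min_le_min le_rfl (ENNReal.ofReal_le_ofReal (by exact_mod_cast by omega : (m:ℝ) + 1 ≤ (n:ℝ) + 1))
  show (∫⁻ ω, F ω ^ p ∂μ) ^ (1 / p) ≤ K
  rw [hlim]
  calc (⨆ n, A n) ^ (1 / p) ≤ (K ^ p) ^ (1 / p) := by
        refine ENNReal.rpow_le_rpow (iSup_le fun n => ?_) (by positivity)
        calc A n = (A n ^ (1 / p)) ^ p := by
              rw [← ENNReal.rpow_mul, one_div_mul_cancel hp0.ne', ENNReal.rpow_one]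
          _ ≤ K ^ p := ENNReal.rpow_le_rpow (hAK n) hp0.le
    _ = K := by rw [← ENNReal.rpow_mul, mul_one_div, div_self hp0.ne', ENNReal.rpow_one]
end

section
/- Let (Ω, F, μ; (F_i)) be a σ-finite filtered measure space, f ∈ ⋂_i L¹_{F_i⁰}(F, μ) nonnegative, and P ∈ F_i with μ(P) > 0 and 2^{k−1} < E[f|F_i] ≤ 2^k on P. Let τ_P := 1_P · inf{ j ≥ i : E[f|F_j] > 2^{k+1} } and let 𝒫(P) := ⋃ over the principal sets Q with respect to P, where Q ranges over all sets of positive measure of the form Q = {2^{l−1} < 1_{{τ_P = j}} E[f|F_j] ≤ 2^l} with j > i and l > k+1. Then μ(𝒫(P)) ≤ (1/2) μ(P). -/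
open MeasureTheory
open scoped ENNReal

/-- the union `𝒫(P)` of the principal sets with respect to `P`
(the sets `Q = {2^{l-1} < 1_{{τ_P = j}} E[f|F_j] ≤ 2^l}`, `j > i`, `l > k+1`) satisfies
`μ(𝒫(P)) ≤ μ(P)/2`.  Here `ω` belongs to `𝒫(P)` iff `ω ∈ P`, the stopping time is
attained at some finite `j > i` (first time `E[f|F_j](ω) > 2^{k+1}`), and the stopped
value lies in some dyadic band `(2^{l-1}, 2^l]` with `l > k+1`. -/
theorem stmt7 {Ω : Type*} {m0 : MeasurableSpace Ω} (μ : Measure Ω) [SigmaFinite μ]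
    (ℱ : MeasureTheory.Filtration ℤ m0) [∀ i, SigmaFinite (μ.trim (ℱ.le i))]
    (f : Ω → ℝ) (hf : Measurable f) (hf0 : 0 ≤ f)
    (hf𝓛 : ∀ (i : ℤ) (E : Set Ω), MeasurableSet[ℱ i] E → μ E < ∞ →
      Integrable f (μ.restrict E))
    (i k : ℤ) (P : Set Ω) (hP : MeasurableSet[ℱ i] P) (hμP : 0 < μ P)
    (hPl : ∀ ω ∈ P, (2 : ℝ) ^ (k - 1) < (μ[f|ℱ i]) ω)
    (hPu : ∀ ω ∈ P, (μ[f|ℱ i]) ω ≤ (2 : ℝ) ^ k) :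
    μ {ω | ω ∈ P ∧ ∃ j : ℤ, i < j ∧
        (∀ j' : ℤ, i ≤ j' → j' < j → (μ[f|ℱ j']) ω ≤ (2 : ℝ) ^ (k + 1)) ∧
        (2 : ℝ) ^ (k + 1) < (μ[f|ℱ j]) ω ∧
        ∃ l : ℤ, k + 1 < l ∧ (2 : ℝ) ^ (l - 1) < (μ[f|ℱ j]) ω ∧
          (μ[f|ℱ j]) ω ≤ (2 : ℝ) ^ l} ≤
      μ P / 2 := by
  classical
  rcases eq_top_or_lt_top (μ P) with hPtop | hPfin
  · rw [hPtop]
    simp [ENNReal.top_div]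
  by_cases hfi : Integrable f μ
  swap
  · exfalso
    obtain ⟨ω, hω⟩ := nonempty_of_measure_ne_zero hμP.ne'
    have h := hPl ω hω
    rw [condExp_of_not_integrable hfi] at h
    have : (0:ℝ) < (2:ℝ) ^ (k - 1) := zpow_pos (by norm_num) _
    simp at h
    linarith
  set c : ℝ := (2:ℝ) ^ (k + 1) with hc
  set A : ℤ → Set Ω := fun j => {ω | ω ∈ P ∧ i < j ∧
      (∀ j' : ℤ, i ≤ j' → j' < j → (μ[f|ℱ j']) ω ≤ c) ∧ c < (μ[f|ℱ j]) ω} with hA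
  have hAmeas : ∀ j, MeasurableSet[ℱ j] (A j) := by
    intro j
    by_cases hij : i < j
    · have hAeq : A j = P ∩ ((⋂ j', ⋂ (_ : i ≤ j'), ⋂ (_ : j' < j),
          {ω | (μ[f|ℱ j']) ω ≤ c}) ∩ {ω | c < (μ[f|ℱ j]) ω}) := by
        ext ω
        simp only [hA, Set.mem_setOf_eq, Set.mem_inter_iff, Set.mem_iInter]
        tauto
      rw [hAeq]
      refine (ℱ.mono hij.le _ hP).inter (MeasurableSet.inter ?_ ?_)
      · refine MeasurableSet.iInter fun j' => MeasurableSet.iInter fun h1 =>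
          MeasurableSet.iInter fun h2 => ?_
        exact ℱ.mono h2.le _
          (measurableSet_le stronglyMeasurable_condExp.measurable (@measurable_const ℝ Ω _ (ℱ j') c))
      · exact measurableSet_lt (@measurable_const ℝ Ω _ (ℱ j) c) stronglyMeasurable_condExp.measurable
    · have : A j = ∅ := by
        ext ω; simp only [hA, Set.mem_setOf_eq, Set.mem_empty_iff_false, iff_false]
        tauto
      rw [this]; exact @MeasurableSet.empty Ω (ℱ j)
  have hAm0 : ∀ j, MeasurableSet (A j) := fun j => ℱ.le j _ (hAmeas j)
  have hAsubP : ∀ j, A j ⊆ P := fun j ω hω => hω.1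
  have hAfin : ∀ j, μ (A j) < ∞ := fun j =>
    lt_of_le_of_lt (measure_mono (hAsubP j)) hPfin
  have hcpos : (0:ℝ) < c := zpow_pos (by norm_num) _
  -- per-j bound
  have hkey : ∀ j, ENNReal.ofReal c * μ (A j) ≤ ∫⁻ ω in A j, ENNReal.ofReal (f ω) ∂μ := by
    intro j
    have h1 : c * (μ (A j)).toReal ≤ ∫ ω in A j, (μ[f|ℱ j]) ω ∂μ :=
      setIntegral_ge_of_const_le_real (hAm0 j) (hAfin j).ne
        (fun ω hω => (hω.2.2.2).le) integrable_condExp.integrableOn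
    have h2 : ∫ ω in A j, (μ[f|ℱ j]) ω ∂μ = ∫ ω in A j, f ω ∂μ :=
      setIntegral_condExp (ℱ.le j) hfi (hAmeas j)
    have h3 : ENNReal.ofReal (∫ ω in A j, f ω ∂μ)
        = ∫⁻ ω in A j, ENNReal.ofReal (f ω) ∂μ :=
      ofReal_integral_eq_lintegral_ofReal hfi.integrableOn
        (Filter.Eventually.of_forall fun ω => hf0 ω)
    calc ENNReal.ofReal c * μ (A j)
        = ENNReal.ofReal (c * (μ (A j)).toReal) := by
          rw [ENNReal.ofReal_mul hcpos.le, ENNReal.ofReal_toReal (hAfin j).ne]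
      _ ≤ ENNReal.ofReal (∫ ω in A j, f ω ∂μ) := ENNReal.ofReal_le_ofReal (h2 ▸ h1)
      _ = _ := h3
  -- disjointness
  have hdisj : Pairwise (Function.onFun Disjoint A) := by
    have key : ∀ j₁ j₂ : ℤ, j₁ < j₂ → Disjoint (A j₁) (A j₂) := by
      intro j₁ j₂ h
      rw [Set.disjoint_left]
      rintro ω ⟨-, hij₁, -, hgt⟩ ⟨-, -, hall, -⟩
      exact absurd (hall j₁ hij₁.le h) (not_le.mpr hgt)
    intro j₁ j₂ hne
    rcases hne.lt_or_gt with h | h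
    · exact key _ _ h
    · exact (key _ _ h).symm
  -- the target set is contained in ⋃ j, A j
  have hsub : {ω | ω ∈ P ∧ ∃ j : ℤ, i < j ∧
        (∀ j' : ℤ, i ≤ j' → j' < j → (μ[f|ℱ j']) ω ≤ (2 : ℝ) ^ (k + 1)) ∧
        (2 : ℝ) ^ (k + 1) < (μ[f|ℱ j]) ω ∧
        ∃ l : ℤ, k + 1 < l ∧ (2 : ℝ) ^ (l - 1) < (μ[f|ℱ j]) ω ∧
          (μ[f|ℱ j]) ω ≤ (2 : ℝ) ^ l} ⊆ ⋃ j, A j := by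
    rintro ω ⟨hωP, j, hij, hall, hgt, -⟩
    exact Set.mem_iUnion.mpr ⟨j, hωP, hij, hall, hgt⟩
  -- total bound
  have hsum : ENNReal.ofReal c * μ (⋃ j, A j)
      ≤ ∫⁻ ω in P, ENNReal.ofReal (f ω) ∂μ := by
    rw [measure_iUnion hdisj hAm0, ENNReal.tsum_mul_left.symm]
    calc ∑' j, ENNReal.ofReal c * μ (A j)
        ≤ ∑' j, ∫⁻ ω in A j, ENNReal.ofReal (f ω) ∂μ := ENNReal.tsum_le_tsum hkey
      _ = ∫⁻ ω in ⋃ j, A j, ENNReal.ofReal (f ω) ∂μ := (lintegral_iUnion hAm0 hdisj _).symm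
      _ ≤ ∫⁻ ω in P, ENNReal.ofReal (f ω) ∂μ :=
          lintegral_mono_set (Set.iUnion_subset hAsubP)
  have hPm0 : MeasurableSet P := ℱ.le i _ hP
  have hPint : ∫⁻ ω in P, ENNReal.ofReal (f ω) ∂μ ≤ ENNReal.ofReal ((2:ℝ)^k) * μ P := by
    have h3 : ENNReal.ofReal (∫ ω in P, f ω ∂μ) = ∫⁻ ω in P, ENNReal.ofReal (f ω) ∂μ :=
      ofReal_integral_eq_lintegral_ofReal hfi.integrableOn
        (Filter.Eventually.of_forall fun ω => hf0 ω)
    have h2 : ∫ ω in P, f ω ∂μ = ∫ ω in P, (μ[f|ℱ i]) ω ∂μ :=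
      (setIntegral_condExp (ℱ.le i) hfi hP).symm
    have h1 : ∫ ω in P, (μ[f|ℱ i]) ω ∂μ ≤ (2:ℝ)^k * (μ P).toReal := by
      calc ∫ ω in P, (μ[f|ℱ i]) ω ∂μ ≤ ∫ ω in P, (2:ℝ)^k ∂μ :=
            setIntegral_mono_on integrable_condExp.integrableOn
              (integrableOn_const hPfin.ne) hPm0 hPu
        _ = (μ P).toReal • (2:ℝ)^k := setIntegral_const _
        _ = (2:ℝ)^k * (μ P).toReal := by rw [smul_eq_mul]; ring
    calc ∫⁻ ω in P, ENNReal.ofReal (f ω) ∂μ = ENNReal.ofReal (∫ ω in P, f ω ∂μ) := h3.symm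
      _ ≤ ENNReal.ofReal ((2:ℝ)^k * (μ P).toReal) :=
          ENNReal.ofReal_le_ofReal (by rw [h2]; exact h1)
      _ = ENNReal.ofReal ((2:ℝ)^k) * μ P := by
          rw [ENNReal.ofReal_mul (zpow_pos (by norm_num : (0:ℝ)<2) k).le,
            ENNReal.ofReal_toReal hPfin.ne]
  -- put together
  have hceq : ENNReal.ofReal c = 2 * ENNReal.ofReal ((2:ℝ)^k) := by
    rw [hc, zpow_add₀ (by norm_num : (2:ℝ) ≠ 0) k 1]
    rw [show (2:ℝ)^k * (2:ℝ)^(1:ℤ) = 2 * (2:ℝ)^k by ring]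
    rw [ENNReal.ofReal_mul (by norm_num : (0:ℝ) ≤ 2)]
    norm_num
  set a := ENNReal.ofReal ((2:ℝ)^k) with ha
  have ha0 : a ≠ 0 := by
    simp [ha, ENNReal.ofReal_eq_zero, not_le, zpow_pos (by norm_num : (0:ℝ)<2) k]
  have hatop : a ≠ ∞ := ENNReal.ofReal_ne_top
  have hfinal : a * (2 * μ (⋃ j, A j)) ≤ a * μ P := by
    calc a * (2 * μ (⋃ j, A j)) = (2 * a) * μ (⋃ j, A j) := by ring
      _ = ENNReal.ofReal c * μ (⋃ j, A j) := by rw [hceq]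
      _ ≤ ∫⁻ ω in P, ENNReal.ofReal (f ω) ∂μ := hsum
      _ ≤ a * μ P := hPint
  have h2le : 2 * μ (⋃ j, A j) ≤ μ P := (ENNReal.mul_le_mul_iff_right ha0 hatop).mp hfinal
  calc μ _ ≤ μ (⋃ j, A j) := measure_mono hsub
    _ ≤ μ P / 2 := by
        rw [ENNReal.le_div_iff_mul_le (Or.inl (by norm_num)) (Or.inl (by norm_num))]
        rw [mul_comm] at h2le
        exact h2le
end

section
/- Let (Ω, F, μ; (F_i)_{i∈ℤ}) be a σ-finite filtered measure space, (α_i)_{i∈ℤ} nonnegative bounded F_i-measurable functions, and 1 < p ≤ q < ∞. If the bilinear bound ∑_{i∈ℤ} ∫_Ω α_i E[f|F_i] E[g|F_i] dμ ≤ C ‖f‖_{L^p(μ)} ‖g‖_{L^{q'}(μ)} holds for all nonnegative f ∈ L^p(μ) ∩ 𝓛 and g ∈ L^{q'}(μ) ∩ 𝓛, then for every i ∈ ℤ and E ∈ F_i with μ(E) < ∞: ( ∫_E ( ∑_{j≥i} α_j )^q dμ )^{1/q} ≤ C μ(E)^{1/p} and ( ∫_E ( ∑_{j≥i} α_j )^{p'}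 dμ )^{1/p'} ≤ C μ(E)^{1/q'}. -/
open MeasureTheory
open scoped ENNReal

namespace Stmt10Aux

variable {Ω : Type*} {m0 : MeasurableSpace Ω} {μ : Measure Ω}

/-- Self-adjointness of conditional expectation against a bounded nonnegative
`m`-measurable weight, in `lintegral` form. -/
lemma adj {m : MeasurableSpace Ω} (hm : m ≤ m0) [SigmaFinite (μ.trim hm)]
    {φ h : Ω → ℝ} (hφm : StronglyMeasurable[m] φ) (hφ0 : 0 ≤ φ) {M : ℝ}
    (hφbd : ∀ ω, φ ω ≤ M) (hh : Integrable h μ) (hh0 : 0 ≤ h) :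
    ∫⁻ ω, ENNReal.ofReal (φ ω) * ENNReal.ofReal ((μ[h|m]) ω) ∂μ
      = ∫⁻ ω, ENNReal.ofReal (φ ω) * ENNReal.ofReal (h ω) ∂μ := by
  have hφm0 : AEStronglyMeasurable[m0] φ μ := (hφm.mono hm).aestronglyMeasurable
  have hbd : ∃ c, ∀ ω, ‖φ ω‖ ≤ c :=
    ⟨M, fun ω => by rw [Real.norm_of_nonneg (hφ0 ω)]; exact hφbd ω⟩
  have h1 : Integrable (fun ω => φ ω * (μ[h|m]) ω) μ :=
    (integrable_condExp (m := m)).bdd_mul hφm0 (ae_of_all _ hbd.choose_spec)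
  have h2 : Integrable (fun ω => φ ω * h ω) μ := hh.bdd_mul hφm0 (ae_of_all _ hbd.choose_spec)
  have hcnn : 0 ≤ᵐ[μ] μ[h|m] := condExp_nonneg (ae_of_all _ hh0)
  have hmul : μ[(fun ω => φ ω * h ω)|m] =ᵐ[μ] fun ω => φ ω * (μ[h|m]) ω :=
    condExp_mul_of_stronglyMeasurable_left hφm h2 hh
  calc ∫⁻ ω, ENNReal.ofReal (φ ω) * ENNReal.ofReal ((μ[h|m]) ω) ∂μ
      = ∫⁻ ω, ENNReal.ofReal (φ ω * (μ[h|m]) ω) ∂μ := by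
        refine lintegral_congr_ae ?_
        filter_upwards [] with ω
        rw [ENNReal.ofReal_mul (hφ0 ω)]
    _ = ENNReal.ofReal (∫ ω, φ ω * (μ[h|m]) ω ∂μ) := by
        refine (ofReal_integral_eq_lintegral_ofReal h1 ?_).symm
        filter_upwards [hcnn] with ω hω
        exact mul_nonneg (hφ0 ω) hω
    _ = ENNReal.ofReal (∫ ω, (μ[(fun ω => φ ω * h ω)|m]) ω ∂μ) := by
        rw [integral_congr_ae hmul]
    _ = ENNReal.ofReal (∫ ω, φ ω * h ω ∂μ) := by rw [integral_condExp hm]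
    _ = ∫⁻ ω, ENNReal.ofReal (φ ω * h ω) ∂μ :=
        ofReal_integral_eq_lintegral_ofReal h2
          (ae_of_all _ fun ω => mul_nonneg (hφ0 ω) (hh0 ω))
    _ = ∫⁻ ω, ENNReal.ofReal (φ ω) * ENNReal.ofReal (h ω) ∂μ := by
        refine lintegral_congr fun ω => ?_
        rw [ENNReal.ofReal_mul (hφ0 ω)]

lemma iSup_min_rpow (S : ℝ≥0∞) {q : ℝ} (hq : 1 ≤ q) :
    ⨆ n : ℕ, min S (n : ℝ≥0∞) ^ q = S ^ q := by
  apply le_antisymm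
  · exact iSup_le fun n => ENNReal.rpow_le_rpow (min_le_left _ _) (by linarith)
  · rcases eq_or_ne S ⊤ with rfl | hS
    · calc (⊤ : ℝ≥0∞) ^ q = ⊤ := ENNReal.top_rpow_of_pos (by linarith)
        _ = ⨆ n : ℕ, (n : ℝ≥0∞) := ENNReal.iSup_natCast.symm
        _ ≤ ⨆ n : ℕ, min (⊤ : ℝ≥0∞) (n : ℝ≥0∞) ^ q := by
            refine iSup_mono fun n => ?_
            rw [min_eq_right le_top]
            rcases Nat.eq_zero_or_pos n with rfl | hn
            · simp
            · calc (n : ℝ≥0∞) = (n : ℝ≥0∞) ^ (1 : ℝ) := (ENNReal.rpow_one _).symm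
                _ ≤ (n : ℝ≥0∞) ^ q :=
                    ENNReal.rpow_le_rpow_of_exponent_le (by exact_mod_cast hn) hq
    · refine le_iSup_of_le ⌈S.toReal⌉₊ ?_
      rw [min_eq_left]
      calc S = ENNReal.ofReal S.toReal := (ENNReal.ofReal_toReal hS).symm
        _ ≤ ENNReal.ofReal ((⌈S.toReal⌉₊ : ℝ)) := ENNReal.ofReal_le_ofReal (Nat.le_ceil _)
        _ = ((⌈S.toReal⌉₊ : ℕ) : ℝ≥0∞) := ENNReal.ofReal_natCast _

/-- From `A ≤ K * A ^ b` with `A ≠ ⊤` and `a + b = 1`, `a > 0`, deduce `A ^ a ≤ K`. -/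
lemma rpow_cancel {A K : ℝ≥0∞} (hA : A ≠ ⊤) {a b : ℝ} (ha : 0 < a) (hb : 0 ≤ b)
    (hab : a + b = 1) (h : A ≤ K * A ^ b) : A ^ a ≤ K := by
  rcases eq_or_ne A 0 with rfl | hA0
  · simp [ENNReal.zero_rpow_of_pos ha]
  · have hne : A ^ b ≠ 0 :=
      (ENNReal.rpow_pos (lt_of_le_of_ne zero_le (Ne.symm hA0)) hA).ne'
    have hnt : A ^ b ≠ ⊤ := ENNReal.rpow_ne_top_of_nonneg hb hA
    have hsplit : A = A ^ a * A ^ b := by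
      rw [← ENNReal.rpow_add_of_nonneg _ _ ha.le hb, hab, ENNReal.rpow_one]
    nth_rewrite 1 [hsplit] at h
    exact (ENNReal.mul_le_mul_iff_left hne hnt).mp h

lemma le_rpow_inv_of_rpow_le {X K : ℝ≥0∞} {a : ℝ} (ha : 0 < a) (h : X ^ a ≤ K) :
    X ≤ K ^ (1 / a) := by
  have h2 := ENNReal.rpow_le_rpow h (by positivity : (0:ℝ) ≤ 1 / a)
  rwa [← ENNReal.rpow_mul, mul_one_div, div_self ha.ne', ENNReal.rpow_one] at h2

lemma rpow_le_of_le_rpow_inv {X K : ℝ≥0∞} {a : ℝ} (ha : 0 < a) (h : X ≤ K ^ (1 / a)) :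
    X ^ a ≤ K := by
  have h2 := ENNReal.rpow_le_rpow h ha.le
  rwa [← ENNReal.rpow_mul, one_div_mul_cancel ha.ne', ENNReal.rpow_one] at h2

end Stmt10Aux

open Stmt10Aux in
/-- necessity of the Sawyer checking conditions.  If the bilinear bound
`∑_i ∫ α_i E[f|F_i] E[g|F_i] dμ ≤ C ‖f‖_{L^p} ‖g‖_{L^{q'}}` holds for all nonnegative
`f ∈ L^p ∩ 𝓛`, `g ∈ L^{q'} ∩ 𝓛`, then for every `i` and `E ∈ F_i` of finite measure the
two checking conditions hold. -/
theorem stmt10 {Ω : Type*} {m0 : MeasurableSpace Ω} (μ : Measure Ω) [SigmaFinite μ]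
    (ℱ : MeasureTheory.Filtration ℤ m0) [∀ i, SigmaFinite (μ.trim (ℱ.le i))]
    (p q : ℝ) (hp : 1 < p) (hpq : p ≤ q)
    (α : ℤ → Ω → ℝ) (hαmeas : ∀ i, StronglyMeasurable[ℱ i] (α i))
    (hα0 : ∀ i ω, 0 ≤ α i ω) (hαbd : ∀ i, ∃ M : ℝ, ∀ ω, α i ω ≤ M)
    (C : ℝ) (hC : 0 ≤ C)
    (hbil : ∀ f g : Ω → ℝ, Measurable f → 0 ≤ f → MemLp f (ENNReal.ofReal p) μ →
      (∀ (i : ℤ) (E : Set Ω), MeasurableSet[ℱ i] E → μ E < ∞ →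
        Integrable f (μ.restrict E)) →
      Measurable g → 0 ≤ g → MemLp g (ENNReal.ofReal (q / (q - 1))) μ →
      (∀ (i : ℤ) (E : Set Ω), MeasurableSet[ℱ i] E → μ E < ∞ →
        Integrable g (μ.restrict E)) →
      ∑' i : ℤ, ∫⁻ ω, ENNReal.ofReal (α i ω) * ENNReal.ofReal ((μ[f|ℱ i]) ω) *
          ENNReal.ofReal ((μ[g|ℱ i]) ω) ∂μ ≤
        ENNReal.ofReal C * (∫⁻ ω, ENNReal.ofReal (f ω) ^ p ∂μ) ^ (1 / p) *
          (∫⁻ ω, ENNReal.ofReal (g ω) ^ (q / (q - 1)) ∂μ) ^ (1 - 1 / q)) :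
    ∀ (i : ℤ) (E : Set Ω), MeasurableSet[ℱ i] E → μ E < ∞ →
      (∫⁻ ω in E, (∑' j : ℤ, if i ≤ j then ENNReal.ofReal (α j ω) else 0) ^ q ∂μ) ^
          (1 / q) ≤ ENNReal.ofReal C * μ E ^ (1 / p) ∧
      (∫⁻ ω in E, (∑' j : ℤ, if i ≤ j then ENNReal.ofReal (α j ω) else 0) ^
            (p / (p - 1)) ∂μ) ^ (1 - 1 / p) ≤ ENNReal.ofReal C * μ E ^ (1 - 1 / q) := by
  intro i E hE hEfin
  have hmE : MeasurableSet E := ℱ.le i E hE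
  have hq : 1 < q := lt_of_lt_of_le hp hpq
  have hp0 : (0:ℝ) < p := by linarith
  have hq0 : (0:ℝ) < q := by linarith
  have hp1 : (0:ℝ) < p - 1 := by linarith
  have hq1 : (0:ℝ) < q - 1 := by linarith
  set χ : Ω → ℝ := E.indicator fun _ => (1:ℝ) with hχdef
  have hχmeas : Measurable χ := measurable_const.indicator hmE
  have hχ0 : 0 ≤ χ := fun ω => Set.indicator_nonneg (fun _ _ => zero_le_one) ω
  have hχle1 : ∀ ω, χ ω ≤ 1 := fun ω => by
    by_cases h : ω ∈ E <;> simp [hχdef, h]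
  have hχmem : ∀ e : ℝ≥0∞, MemLp χ e μ := fun e =>
    memLp_indicator_const e hmE 1 (Or.inr hEfin.ne)
  have hχint : Integrable χ μ := memLp_one_iff_integrable.mp (hχmem 1)
  set S : Ω → ℝ≥0∞ := fun ω => ∑' j : ℤ, if i ≤ j then ENNReal.ofReal (α j ω) else 0
    with hSdef
  have hαm0 : ∀ j, Measurable (α j) := fun j => ((hαmeas j).mono (ℱ.le j)).measurable
  have hSmeas : Measurable S := by
    apply Measurable.ennreal_tsum
    intro j
    by_cases h : i ≤ j
    · simpa [h] using (hαm0 j).ennreal_ofReal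
    · simpa [h] using measurable_const
  set T : ℕ → Ω → ℝ≥0∞ := fun n ω => min (S ω) n with hTdef
  have hTmeas : ∀ n, Measurable (T n) := fun n => hSmeas.min measurable_const
  have hTtop : ∀ n ω, T n ω ≠ ⊤ := fun n ω =>
    (lt_of_le_of_lt (min_le_right _ _) (ENNReal.natCast_lt_top n)).ne
  have hTleS : ∀ n ω, T n ω ≤ S ω := fun n ω => min_le_left _ _
  have hTlen : ∀ n ω, T n ω ≤ (n : ℝ≥0∞) := fun n ω => min_le_right _ _
  -- properties of the truncated-power test functions
  have hgen : ∀ r : ℝ, 0 < r → ∀ n : ℕ,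
      Measurable (E.indicator fun ω => (T n ω ^ r).toReal) ∧
      0 ≤ (E.indicator fun ω => (T n ω ^ r).toReal) ∧
      (∀ e : ℝ≥0∞, MemLp (E.indicator fun ω => (T n ω ^ r).toReal) e μ) ∧
      Integrable (E.indicator fun ω => (T n ω ^ r).toReal) μ := by
    intro r hr n
    have hmeas : Measurable (E.indicator fun ω => (T n ω ^ r).toReal) :=
      (((hTmeas n).pow_const r).ennreal_toReal).indicator hmE
    have h0 : 0 ≤ (E.indicator fun ω => (T n ω ^ r).toReal) :=
      fun ω => Set.indicator_nonneg (fun _ _ => ENNReal.toReal_nonneg) ω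
    have hbound : ∀ ω, ‖(E.indicator fun ω => (T n ω ^ r).toReal) ω‖ ≤
        ‖(E.indicator fun _ => ((n:ℝ) ^ r) : Ω → ℝ) ω‖ := by
      intro ω
      by_cases hω : ω ∈ E
      · rw [Set.indicator_of_mem hω, Set.indicator_of_mem hω,
          Real.norm_of_nonneg ENNReal.toReal_nonneg,
          Real.norm_of_nonneg (Real.rpow_nonneg (Nat.cast_nonneg n) r)]
        have h1 : T n ω ^ r ≤ ((n:ℝ≥0∞)) ^ r :=
          ENNReal.rpow_le_rpow (hTlen n ω) hr.le
        have h2 : (((n:ℝ≥0∞)) ^ r).toReal = (n:ℝ) ^ r := by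
          rw [← ENNReal.toReal_rpow]; simp
        calc (T n ω ^ r).toReal
            ≤ (((n:ℝ≥0∞)) ^ r).toReal :=
              ENNReal.toReal_mono
                (ENNReal.rpow_ne_top_of_nonneg hr.le (ENNReal.natCast_ne_top n)) h1
          _ = (n:ℝ) ^ r := h2
      · simp [Set.indicator_of_notMem hω]
    have hmem : ∀ e : ℝ≥0∞, MemLp (E.indicator fun ω => (T n ω ^ r).toReal) e μ :=
      fun e => MemLp.of_le (memLp_indicator_const e hmE ((n:ℝ) ^ r) (Or.inr hEfin.ne))
        hmeas.aestronglyMeasurable (ae_of_all _ hbound)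
    exact ⟨hmeas, h0, hmem, memLp_one_iff_integrable.mp (hmem 1)⟩
  -- key lower bound for the bilinear sum
  have key : ∀ ψ : Ω → ℝ, Measurable ψ → 0 ≤ ψ → Integrable ψ μ →
      ∫⁻ ω in E, S ω * ENNReal.ofReal (ψ ω) ∂μ ≤
        ∑' j : ℤ, ∫⁻ ω, ENNReal.ofReal (α j ω) * ENNReal.ofReal ((μ[χ|ℱ j]) ω) *
          ENNReal.ofReal ((μ[ψ|ℱ j]) ω) ∂μ := by
    intro ψ hψm hψ0 hψint
    set G : ℤ → Ω → ℝ≥0∞ := fun j ω =>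
      (if i ≤ j then ENNReal.ofReal (α j ω) else 0) * ENNReal.ofReal (ψ ω) with hGdef
    have hGmeas : ∀ j, Measurable (G j) := by
      intro j
      by_cases h : i ≤ j
      · simp only [hGdef, if_pos h]
        exact (hαm0 j).ennreal_ofReal.mul hψm.ennreal_ofReal
      · simpa [hGdef, h] using measurable_const
    have step1 : ∫⁻ ω in E, S ω * ENNReal.ofReal (ψ ω) ∂μ
        = ∑' j : ℤ, ∫⁻ ω in E, G j ω ∂μ := by
      rw [← lintegral_tsum fun j => (hGmeas j).aemeasurable]
      refine lintegral_congr fun ω => ?_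
      simp only [hGdef, hSdef]
      exact ENNReal.tsum_mul_right.symm
    rw [step1]
    refine ENNReal.tsum_le_tsum fun j => ?_
    by_cases hij : i ≤ j
    · have hχsm : StronglyMeasurable[ℱ j] χ :=
        stronglyMeasurable_const.indicator (ℱ.mono hij E hE)
      have hχj : μ[χ|ℱ j] = χ :=
        condExp_of_stronglyMeasurable (ℱ.le j) hχsm hχint
      obtain ⟨M, hM⟩ := hαbd j
      set φ : Ω → ℝ := fun ω => α j ω * χ ω with hφdef
      have hφm : StronglyMeasurable[ℱ j] φ := (hαmeas j).mul hχsm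
      have hφ0 : 0 ≤ φ := fun ω => mul_nonneg (hα0 j ω) (hχ0 ω)
      have hφbd : ∀ ω, φ ω ≤ M := fun ω =>
        le_trans (mul_le_of_le_one_right (hα0 j ω) (hχle1 ω)) (hM ω)
      refine le_of_eq ?_
      calc ∫⁻ ω in E, G j ω ∂μ
          = ∫⁻ ω in E, ENNReal.ofReal (α j ω) * ENNReal.ofReal (ψ ω) ∂μ := by
            refine lintegral_congr fun ω => ?_
            simp [hGdef, hij]
        _ = ∫⁻ ω, E.indicator
              (fun ω => ENNReal.ofReal (α j ω) * ENNReal.ofReal (ψ ω)) ω ∂μ :=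
            (lintegral_indicator hmE _).symm
        _ = ∫⁻ ω, ENNReal.ofReal (φ ω) * ENNReal.ofReal (ψ ω) ∂μ := by
            refine lintegral_congr fun ω => ?_
            by_cases hω : ω ∈ E <;>
              simp [hφdef, hχdef, hω, Set.indicator_of_mem, Set.indicator_of_notMem]
        _ = ∫⁻ ω, ENNReal.ofReal (φ ω) * ENNReal.ofReal ((μ[ψ|ℱ j]) ω) ∂μ :=
            (adj (ℱ.le j) hφm hφ0 hφbd hψint hψ0).symm
        _ = ∫⁻ ω, ENNReal.ofReal (α j ω) * ENNReal.ofReal (χ ω) *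
              ENNReal.ofReal ((μ[ψ|ℱ j]) ω) ∂μ := by
            refine lintegral_congr fun ω => ?_
            rw [hφdef, ENNReal.ofReal_mul (hα0 j ω)]
        _ = ∫⁻ ω, ENNReal.ofReal (α j ω) * ENNReal.ofReal ((μ[χ|ℱ j]) ω) *
              ENNReal.ofReal ((μ[ψ|ℱ j]) ω) ∂μ := by rw [hχj]
    · have : G j = fun _ => 0 := by funext ω; simp [hGdef, hij]
      simp [this]
  -- the χ-integral
  have hχlint : ∀ e : ℝ, 0 < e → ∫⁻ ω, ENNReal.ofReal (χ ω) ^ e ∂μ = μ E := by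
    intro e he
    have : (fun ω => ENNReal.ofReal (χ ω) ^ e) = E.indicator fun _ => (1:ℝ≥0∞) := by
      funext ω
      by_cases hω : ω ∈ E <;> simp [hχdef, hω, ENNReal.zero_rpow_of_pos he]
    rw [this, lintegral_indicator hmE, setLIntegral_one]
  -- the truncated-power integral
  have hglint : ∀ r : ℝ, 0 < r → ∀ e : ℝ, 0 < e → ∀ n : ℕ,
      ∫⁻ ω, ENNReal.ofReal ((E.indicator fun ω => (T n ω ^ r).toReal) ω) ^ e ∂μ
        = ∫⁻ ω in E, T n ω ^ (r * e) ∂μ := by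
    intro r hr e he n
    rw [← lintegral_indicator hmE]
    refine lintegral_congr fun ω => ?_
    by_cases hω : ω ∈ E
    · rw [Set.indicator_of_mem hω, Set.indicator_of_mem hω,
        ENNReal.ofReal_toReal (ENNReal.rpow_ne_top_of_nonneg hr.le (hTtop n ω)),
        ENNReal.rpow_mul]
    · rw [Set.indicator_of_notMem hω, Set.indicator_of_notMem hω,
        ENNReal.ofReal_zero, ENNReal.zero_rpow_of_pos he]
  -- lower bound: ∫_E T^(1+r) ≤ ∫_E S * ofReal (indicator (T^r).toReal)
  have hlow : ∀ r : ℝ, 0 < r → ∀ n : ℕ,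
      ∫⁻ ω in E, T n ω ^ (1 + r) ∂μ ≤
        ∫⁻ ω in E, S ω * ENNReal.ofReal
          ((E.indicator fun ω => (T n ω ^ r).toReal) ω) ∂μ := by
    intro r hr n
    refine setLIntegral_mono
      (hSmeas.mul ((hgen r hr n).1).ennreal_ofReal) fun ω hω => ?_
    rw [Set.indicator_of_mem hω,
      ENNReal.ofReal_toReal (ENNReal.rpow_ne_top_of_nonneg hr.le (hTtop n ω)),
      ENNReal.rpow_add_of_nonneg _ _ zero_le_one hr.le, ENNReal.rpow_one]
    exact mul_le_mul' (hTleS n ω) le_rfl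
  -- finiteness of the truncated integrals
  have hfin : ∀ s : ℝ, 0 < s → ∀ n : ℕ, (∫⁻ ω in E, T n ω ^ s ∂μ) ≠ ⊤ := by
    intro s hs n
    have h1 : ∫⁻ ω in E, T n ω ^ s ∂μ ≤ ∫⁻ _ in E, ((n:ℝ≥0∞)) ^ s ∂μ :=
      setLIntegral_mono measurable_const fun ω _ =>
        ENNReal.rpow_le_rpow (hTlen n ω) hs.le
    rw [setLIntegral_const] at h1
    exact (lt_of_le_of_lt h1 (ENNReal.mul_lt_top
      (ENNReal.rpow_ne_top_of_nonneg hs.le (ENNReal.natCast_ne_top n)).lt_top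
      hEfin)).ne
  -- monotone convergence
  have hsup : ∀ s : ℝ, 1 ≤ s →
      ∫⁻ ω in E, S ω ^ s ∂μ = ⨆ n : ℕ, ∫⁻ ω in E, T n ω ^ s ∂μ := by
    intro s hs
    rw [← lintegral_iSup (fun n => (hTmeas n).pow_const s)]
    · refine lintegral_congr fun ω => ?_
      exact (iSup_min_rpow (S ω) hs).symm
    · intro m n hmn ω
      exact ENNReal.rpow_le_rpow
        (min_le_min le_rfl (by exact_mod_cast Nat.cast_le.mpr hmn)) (by linarith)
  constructor
  -- Part 1
  · have hr : (0:ℝ) < q - 1 := hq1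
    have hKgoal : ∀ n : ℕ, (∫⁻ ω in E, T n ω ^ q ∂μ) ≤
        (ENNReal.ofReal C * μ E ^ (1 / p)) ^ (1 / (1 / q)) := by
      intro n
      set g : Ω → ℝ := E.indicator fun ω => (T n ω ^ (q - 1)).toReal with hgdef
      obtain ⟨hgm, hg0, hgmem, hgint⟩ := hgen (q - 1) hr n
      have hb := hbil χ g hχmeas hχ0 (hχmem _) (fun _ _ _ _ => hχint.restrict)
        hgm hg0 (hgmem _) (fun _ _ _ _ => hgint.restrict)
      rw [hχlint p hp0] at hb
      have hge : ∫⁻ ω, ENNReal.ofReal (g ω) ^ (q / (q - 1)) ∂μ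
          = ∫⁻ ω in E, T n ω ^ q ∂μ := by
        rw [hglint (q - 1) hr (q / (q - 1)) (by positivity) n]
        congr 1
        funext ω
        congr 1
        field_simp
      rw [hge] at hb
      have hlb : ∫⁻ ω in E, T n ω ^ q ∂μ ≤
          ∑' j : ℤ, ∫⁻ ω, ENNReal.ofReal (α j ω) * ENNReal.ofReal ((μ[χ|ℱ j]) ω) *
            ENNReal.ofReal ((μ[g|ℱ j]) ω) ∂μ := by
        refine le_trans ?_ (key g hgm hg0 hgint)
        have : (1:ℝ) + (q - 1) = q := by ring
        rw [← this]
        exact hlow (q - 1) hr n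
      have hAbd : ∫⁻ ω in E, T n ω ^ q ∂μ ≤
          ENNReal.ofReal C * μ E ^ (1 / p) * (∫⁻ ω in E, T n ω ^ q ∂μ) ^ (1 - 1 / q) :=
        le_trans hlb hb
      have hstep : (∫⁻ ω in E, T n ω ^ q ∂μ) ^ (1 / q) ≤
          ENNReal.ofReal C * μ E ^ (1 / p) :=
        rpow_cancel (hfin q hq0 n) (by positivity) (by
          have : 1 / q ≤ 1 := by rw [div_le_one hq0]; linarith
          linarith) (by ring) hAbd
      exact le_rpow_inv_of_rpow_le (by positivity) hstep
    have hS : (∫⁻ ω in E, S ω ^ q ∂μ) ≤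
        (ENNReal.ofReal C * μ E ^ (1 / p)) ^ (1 / (1 / q)) := by
      rw [hsup q hq.le]
      exact iSup_le hKgoal
    exact rpow_le_of_le_rpow_inv (by positivity) hS
  -- Part 2
  · have hr : (0:ℝ) < p / (p - 1) - 1 := by
      rw [sub_pos, lt_div_iff₀ hp1]; linarith
    have hs2 : (0:ℝ) < p / (p - 1) := by positivity
    have hs2' : (1:ℝ) ≤ p / (p - 1) := by linarith
    have hKgoal : ∀ n : ℕ, (∫⁻ ω in E, T n ω ^ (p / (p - 1)) ∂μ) ≤
        (ENNReal.ofReal C * μ E ^ (1 - 1 / q)) ^ (1 / (1 - 1 / p)) := by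
      intro n
      set f : Ω → ℝ := E.indicator fun ω => (T n ω ^ (p / (p - 1) - 1)).toReal with hfdef
      obtain ⟨hfm, hf0, hfmem, hfint⟩ := hgen (p / (p - 1) - 1) hr n
      have hb := hbil f χ hfm hf0 (hfmem _) (fun _ _ _ _ => hfint.restrict)
        hχmeas hχ0 (hχmem _) (fun _ _ _ _ => hχint.restrict)
      rw [hχlint (q / (q - 1)) (by positivity)] at hb
      have hfe : ∫⁻ ω, ENNReal.ofReal (f ω) ^ p ∂μ
          = ∫⁻ ω in E, T n ω ^ (p / (p - 1)) ∂μ := by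
        rw [hglint (p / (p - 1) - 1) hr p hp0 n]
        congr 1
        funext ω
        congr 1
        field_simp
        ring
      rw [hfe] at hb
      have hswap : ∑' j : ℤ, ∫⁻ ω, ENNReal.ofReal (α j ω) *
            ENNReal.ofReal ((μ[χ|ℱ j]) ω) * ENNReal.ofReal ((μ[f|ℱ j]) ω) ∂μ
          = ∑' j : ℤ, ∫⁻ ω, ENNReal.ofReal (α j ω) *
            ENNReal.ofReal ((μ[f|ℱ j]) ω) * ENNReal.ofReal ((μ[χ|ℱ j]) ω) ∂μ :=
        tsum_congr fun j => lintegral_congr fun ω => mul_right_comm _ _ _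
      have hlb : ∫⁻ ω in E, T n ω ^ (p / (p - 1)) ∂μ ≤
          ∑' j : ℤ, ∫⁻ ω, ENNReal.ofReal (α j ω) * ENNReal.ofReal ((μ[f|ℱ j]) ω) *
            ENNReal.ofReal ((μ[χ|ℱ j]) ω) ∂μ := by
        rw [← hswap]
        refine le_trans ?_ (key f hfm hf0 hfint)
        have : (1:ℝ) + (p / (p - 1) - 1) = p / (p - 1) := by ring
        rw [← this]
        exact hlow (p / (p - 1) - 1) hr n
      have hAbd : ∫⁻ ω in E, T n ω ^ (p / (p - 1)) ∂μ ≤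
          ENNReal.ofReal C * μ E ^ (1 - 1 / q) *
            (∫⁻ ω in E, T n ω ^ (p / (p - 1)) ∂μ) ^ (1 / p) := by
        refine le_trans (le_trans hlb hb) (le_of_eq ?_)
        ring
      have hstep : (∫⁻ ω in E, T n ω ^ (p / (p - 1)) ∂μ) ^ (1 - 1 / p) ≤
          ENNReal.ofReal C * μ E ^ (1 - 1 / q) :=
        rpow_cancel (hfin (p / (p - 1)) hs2 n) (by
          have : 1 / p < 1 := by rw [div_lt_one hp0]; linarith
          linarith) (by positivity) (by ring) hAbd
      exact le_rpow_inv_of_rpow_le (by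
        have : 1 / p < 1 := by rw [div_lt_one hp0]; linarith
        linarith) hstep
    have hS : (∫⁻ ω in E, S ω ^ (p / (p - 1)) ∂μ) ≤
        (ENNReal.ofReal C * μ E ^ (1 - 1 / q)) ^ (1 / (1 - 1 / p)) := by
      rw [hsup (p / (p - 1)) hs2']
      exact iSup_le hKgoal
    exact rpow_le_of_le_rpow_inv (by
      have : 1 / p < 1 := by rw [div_lt_one hp0]; linarith
      linarith) hS
end
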